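/- There exists a function f : [0.01,10] × [0.01,10] → ℝ that is not jointly convex, but whose Stackelberg reduction Φ(M) = f(M, w*(M)) with w*(M) = argmin_{w ∈ [0.01,10]} f(M,w) is strongly convex. Concretely, f(M,w) = (Mw − 1)² + 0.1 M² is not convex on [0.01,10]² (its Hessian at (0.5,0.5) has a negative eigenvalue), while Φ(M) = (M·min(10, 1/M) − 1)² + 0.1 M² is 0.05-strongly convex on [0.01,10]. -/

import Mathlib

-- Φ values on the two regimes
lemma phiL {M : ℝ} (h1 : 0.01 ≤ M) (h2 : M ≤ 0.1) :
    (M * min 10 (1 / M) - 1) ^ 2 + 0.1 * M ^ 2 = (10 * M - 1) ^ 2 + 0.1 * M ^ 2 := by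
  have hM : (0:ℝ) < M := by linarith
  have : min (10:ℝ) (1/M) = 10 := by
    apply min_eq_left
    rw [le_div_iff₀ hM]; linarith
  rw [this]; ring

lemma phiR {M : ℝ} (h2 : 0.1 ≤ M) :
    (M * min 10 (1 / M) - 1) ^ 2 + 0.1 * M ^ 2 = 0.1 * M ^ 2 := by
  have hM : (0:ℝ) < M := by linarith
  have : min (10:ℝ) (1/M) = 1/M := by
    apply min_eq_right
    rw [div_le_iff₀ hM]; linarith
  rw [this]
  field_simp
  ring

set_option maxHeartbeats 1000000 in
/-- convexification via Stackelberg reduction. The non-convex objective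
`f(M,w) = (Mw − 1)² + 0.1 M²` on `[0.01,10]²` has best response `w*(M) = min(10, 1/M)`,
and the reduced objective `Φ(M) = (M·min(10,1/M) − 1)² + 0.1 M²` is `0.05`-strongly
convex on `[0.01,10]`, even though `f` is not jointly convex. -/
theorem stmt5 :
    (¬ ConvexOn ℝ ((Set.Icc (0.01 : ℝ) 10) ×ˢ (Set.Icc (0.01 : ℝ) 10))
      (fun p : ℝ × ℝ => (p.1 * p.2 - 1) ^ 2 + 0.1 * p.1 ^ 2)) ∧
    (∀ M ∈ Set.Icc (0.01 : ℝ) 10,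
      IsMinOn (fun w : ℝ => (M * w - 1) ^ 2 + 0.1 * M ^ 2) (Set.Icc (0.01 : ℝ) 10)
        (min 10 (1 / M))) ∧
    StrongConvexOn (Set.Icc (0.01 : ℝ) 10) 0.05
      (fun M : ℝ => (M * min 10 (1 / M) - 1) ^ 2 + 0.1 * M ^ 2) := by
  refine ⟨?_, ?_, ?_⟩
  · -- not convex: points (0.4,0.4), (0.6,0.6), midpoint (0.5,0.5)
    intro h
    have ha : ((0.4 : ℝ), (0.4 : ℝ)) ∈ (Set.Icc (0.01 : ℝ) 10) ×ˢ (Set.Icc (0.01 : ℝ) 10) := by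
      constructor <;> constructor <;> norm_num
    have hb : ((0.6 : ℝ), (0.6 : ℝ)) ∈ (Set.Icc (0.01 : ℝ) 10) ×ˢ (Set.Icc (0.01 : ℝ) 10) := by
      constructor <;> constructor <;> norm_num
    have := h.2 ha hb (by norm_num : (0:ℝ) ≤ 1/2) (by norm_num : (0:ℝ) ≤ 1/2) (by norm_num)
    simp only [Prod.smul_mk, smul_eq_mul, Prod.mk_add_mk] at this
    norm_num at this
  · -- best response
    intro M hM
    obtain ⟨hM1, hM2⟩ := hM
    have hMpos : (0:ℝ) < M := by linarith
    intro w hw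
    obtain ⟨hw1, hw2⟩ := hw
    simp only [Set.mem_setOf_eq]
    rcases le_or_gt 0.1 M with h | h
    · rw [phiR h]
      nlinarith [sq_nonneg (M * w - 1)]
    · rw [phiL hM1 (le_of_lt h)]
      -- (10M-1)² ≤ (Mw-1)²  since Mw ≤ 10M and Mw+10M ≤ 2
      nlinarith [mul_nonneg (mul_nonneg hMpos.le (by linarith : (0:ℝ) ≤ 10 - w))
        (by nlinarith : (0:ℝ) ≤ 2 - M * w - 10 * M)]
  · -- strong convexity
    constructor
    · exact convex_Icc _ _
    intro x hx y hy a b ha hb hab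
    obtain ⟨hx1, hx2⟩ := hx
    obtain ⟨hy1, hy2⟩ := hy
    simp only [smul_eq_mul]
    have hz1 : 0.01 ≤ a * x + b * y := by nlinarith
    have hz2 : a * x + b * y ≤ 10 := by nlinarith
    have hnorm : ‖x - y‖ ^ 2 = (x - y) ^ 2 := by
      rw [Real.norm_eq_abs, sq_abs]
    have key : ∀ t : ℝ, 0.01 ≤ t → t ≤ 10 →
        ((t * min 10 (1 / t) - 1) ^ 2 + 0.1 * t ^ 2 = (10 * t - 1) ^ 2 + 0.1 * t ^ 2 ∧ t ≤ 0.1)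
        ∨ ((t * min 10 (1 / t) - 1) ^ 2 + 0.1 * t ^ 2 = 0.1 * t ^ 2 ∧ 0.1 ≤ t) := by
      intro t ht1 ht2
      rcases le_or_gt t 0.1 with h | h
      · exact Or.inl ⟨phiL ht1 h, h⟩
      · exact Or.inr ⟨phiR h.le, h.le⟩
    rcases key x hx1 hx2 with ⟨ex, cx⟩ | ⟨ex, cx⟩ <;>
      rcases key y hy1 hy2 with ⟨ey, cy⟩ | ⟨ey, cy⟩ <;>
      rcases key (a * x + b * y) hz1 hz2 with ⟨ez, cz⟩ | ⟨ez, cz⟩ <;>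
      rw [ez, ex, ey, Real.norm_eq_abs, sq_abs] <;>
      clear key hnorm ez ex ey
    · -- LLL
      have hb1 : b = 1 - a := by linarith
      subst hb1
      nlinarith [mul_nonneg (mul_nonneg ha hb) (sq_nonneg (x - y))]
    · -- LLR
      have hb1 : b = 1 - a := by linarith
      subst hb1
      nlinarith [mul_nonneg (mul_nonneg ha hb) (sq_nonneg (x - y)),
        sq_nonneg (10 * (a * x + (1 - a) * y) - 1)]
    · -- LRL
      have hb1 : b = 1 - a := by linarith
      subst hb1
      have t1 : (0:ℝ) ≤ a * (y - x) - (y - 0.1) := by linarith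
      have h1 := mul_nonneg (mul_nonneg hb (by linarith : (0:ℝ) ≤ y - x)) t1
      have h2 := mul_nonneg (mul_nonneg hb (by linarith : (0:ℝ) ≤ y - 0.1))
          (by linarith : (0:ℝ) ≤ 0.1 - x)
      nlinarith [mul_nonneg (mul_nonneg ha hb) (sq_nonneg (x - y)), h1, h2]
    · -- LRR
      have hb1 : b = 1 - a := by linarith
      subst hb1
      nlinarith [mul_nonneg (mul_nonneg ha hb) (sq_nonneg (x - y)),
        mul_nonneg ha (sq_nonneg (10 * x - 1))]
    · -- RLL
      have hb1 : b = 1 - a := by linarith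
      subst hb1
      have t1 : (0:ℝ) ≤ (1 - a) * (x - y) - (x - 0.1) := by linarith
      have h1 := mul_nonneg (mul_nonneg ha (by linarith : (0:ℝ) ≤ x - y)) t1
      have h2 := mul_nonneg (mul_nonneg ha (by linarith : (0:ℝ) ≤ x - 0.1))
          (by linarith : (0:ℝ) ≤ 0.1 - y)
      nlinarith [mul_nonneg (mul_nonneg ha hb) (sq_nonneg (x - y)), h1, h2]
    · -- RLR
      have hb1 : b = 1 - a := by linarith
      subst hb1
      nlinarith [mul_nonneg (mul_nonneg ha hb) (sq_nonneg (x - y)),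
        mul_nonneg hb (sq_nonneg (10 * y - 1))]
    · -- RRL
      have p := mul_nonneg ha (by linarith : (0:ℝ) ≤ x - 0.1)
      have q := mul_nonneg hb (by linarith : (0:ℝ) ≤ y - 0.1)
      have h1 : (0:ℝ) ≤ 10 * (a * x + b * y) - 1 := by nlinarith
      have h2 : 10 * (a * x + b * y) - 1 ≤ 0 := by linarith
      have h3 := mul_nonneg h1 (by linarith : (0:ℝ) ≤ 1 - (10 * (a * x + b * y) - 1) - 1)
      have hb1 : b = 1 - a := by linarith
      subst hb1
      nlinarith [mul_nonneg (mul_nonneg ha hb) (sq_nonneg (x - y)), h1, h2, h3]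
    · -- RRR
      have hb1 : b = 1 - a := by linarith
      subst hb1
      nlinarith [mul_nonneg (mul_nonneg ha hb) (sq_nonneg (x - y))]
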